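/- Let N be a lattice of rank n and e_1,...,e_n a complete collection of Demazure roots of a fan Σ in N⊗ℚ with distinguished primitive vectors p_1,...,p_n, i.e. ⟨p_i, e_j⟩ = -δ_{ij} for all i, j. Then p_1,...,p_n form a ℤ-basis of N and -e_1,...,-e_n is the dual basis of the dual lattice M. -/

import Mathlib

/-- The standard pairing between the lattice `N = ℤ^n` and its dual `M = ℤ^n`. -/
def dotp {n : ℕ} (p e : Fin n → ℤ) : ℤ := ∑ k, p k * e k

/-- If `e_1, …, e_n` is a complete collection of Demazure roots with
distinguished primitive vectors `p_1, …, p_n`, i.e. `⟨p_i, e_j⟩ = -δ_{ij}`, then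
`p_1, …, p_n` is a `ℤ`-basis of `N` and `-e_1, …, -e_n` is the dual basis of `M`. -/
theorem stmt_4 (n : ℕ) (p e : Fin n → Fin n → ℤ)
    (h : ∀ i j, dotp (p i) (e j) = if i = j then -1 else 0) :
    (∃ b : Module.Basis (Fin n) ℤ (Fin n → ℤ), ∀ i, b i = p i) ∧
    (∀ v : Fin n → ℤ, v = ∑ i, dotp v (-(e i)) • p i) ∧
    (∀ m : Fin n → ℤ, m = ∑ j, dotp (p j) m • (-(e j))) := by
  classical
  set A : Matrix (Fin n) (Fin n) ℤ := Matrix.of p with hA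
  set B : Matrix (Fin n) (Fin n) ℤ := Matrix.of (fun j k => -(e j k)) with hB
  have hAB : A * B.transpose = 1 := by
    ext i j
    have := h i j
    simp only [dotp] at this
    simp only [Matrix.mul_apply, Matrix.transpose_apply, hA, hB, Matrix.of_apply,
      Matrix.one_apply]
    rw [show (∑ k, p i k * -e j k) = -∑ k, p i k * e j k by
      rw [← Finset.sum_neg_distrib]; exact Finset.sum_congr rfl fun k _ => by ring]
    rw [this]
    split <;> simp
  have hBA : B.transpose * A = 1 := mul_eq_one_comm.mp hAB
  -- entrywise versions
  have key1 : ∀ k j : Fin n, (∑ i, (-(e i k)) * p i j) = if k = j then 1 else 0 := by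
    intro k j
    have := congrFun (congrFun hBA k) j
    simpa [Matrix.mul_apply, Matrix.transpose_apply, hA, hB, Matrix.one_apply] using this
  have hAtB : A.transpose * B = 1 := by
    have := congrArg Matrix.transpose hBA
    simpa [Matrix.transpose_mul] using this
  have key2 : ∀ l k : Fin n, (∑ j, p j l * (-(e j k))) = if l = k then 1 else 0 := by
    intro l k
    have := congrFun (congrFun hAtB l) k
    simpa [Matrix.mul_apply, Matrix.transpose_apply, hA, hB, Matrix.one_apply] using this
  refine ⟨?_, ?_, ?_⟩
  · -- basis
    have hAtB' : A.transpose * B.transpose.transpose = 1 := by simpa using hAtB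
    have hBAt : B.transpose.transpose * A.transpose = 1 := by
      have := congrArg Matrix.transpose hAB
      simpa [Matrix.transpose_mul] using this
    let f : (Fin n → ℤ) ≃ₗ[ℤ] (Fin n → ℤ) :=
      LinearEquiv.ofLinear (Matrix.toLin' A.transpose) (Matrix.toLin' B.transpose.transpose)
        (by rw [← Matrix.toLin'_mul, hAtB', Matrix.toLin'_one])
        (by rw [← Matrix.toLin'_mul, hBAt, Matrix.toLin'_one])
    refine ⟨(Pi.basisFun ℤ (Fin n)).map f, fun i => ?_⟩
    ext j
    simp only [Module.Basis.map_apply, Pi.basisFun_apply, f, LinearEquiv.ofLinear_apply,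
      Matrix.toLin'_apply, Matrix.mulVec, dotProduct, Matrix.transpose_apply,
      hA, Matrix.of_apply]
    simp [Pi.single_apply, Finset.sum_ite_eq, mul_comm]
  · intro v
    funext j
    simp only [Finset.sum_apply, Pi.smul_apply, smul_eq_mul, dotp, Pi.neg_apply]
    calc v j = ∑ k, v k * (∑ i, (-(e i k)) * p i j) := by
          simp only [key1]
          simp [mul_ite, Finset.sum_ite_eq']
      _ = ∑ k, ∑ i, v k * ((-(e i k)) * p i j) := by simp [Finset.mul_sum]
      _ = ∑ i, ∑ k, v k * ((-(e i k)) * p i j) := Finset.sum_comm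
      _ = ∑ i, (∑ k, v k * -e i k) * p i j := by
          refine Finset.sum_congr rfl fun i _ => ?_
          rw [Finset.sum_mul]
          exact Finset.sum_congr rfl fun k _ => (mul_assoc _ _ _).symm
  · intro m
    funext k
    simp only [Finset.sum_apply, Pi.smul_apply, smul_eq_mul, dotp, Pi.neg_apply]
    calc m k = ∑ l, m l * (∑ j, p j l * (-(e j k))) := by
          simp only [key2]
          simp [mul_ite, Finset.sum_ite_eq']
      _ = ∑ l, ∑ j, m l * (p j l * (-(e j k))) := by simp [Finset.mul_sum]
      _ = ∑ j, ∑ l, m l * (p j l * (-(e j k))) := Finset.sum_comm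
      _ = ∑ j, (∑ l, p j l * m l) * -e j k := by
          refine Finset.sum_congr rfl fun j _ => ?_
          rw [Finset.sum_mul]
          exact Finset.sum_congr rfl fun l _ => by ring
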